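/- Let G be a finite DAG in which s₀ is the unique state with no parents, every state is reachable from s₀, X is the nonempty terminal set, every non-terminal state has at least one child, and R : X → ℝ_{>0} is a reward function. Let F be the flow-iteration solution for R and define the forward policy P_F(s'|s) = F(s')/(|B(s')|·F(s)) for each edge s → s'. Then for every terminal state x ∈ X, the sum over all complete trajectories τ = (s₀ → s₁ → ⋯ → s_n = x) of the products Π_{t=0}^{n-1} P_F(s_{t+1}|s_t) equals R(x)/F(s₀). In particular, the policy P_F samples each terminal state x with probability proportional to R(x) (reward matching). -/

import Mathlib

/-- The set of children of `s` (states reachable via one edge, i.e. available actions). -/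
def children {S : Type*} [Fintype S] (E : S → S → Prop) [DecidableRel E] (s : S) : Finset S :=
  Finset.univ.filter (fun s' => E s s')

/-- The set of parents of `s` (states with an edge into `s`). -/
def parents {S : Type*} [Fintype S] (E : S → S → Prop) [DecidableRel E] (s : S) : Finset S :=
  Finset.univ.filter (fun s'' => E s'' s)

section Aux

variable {S : Type*} [Fintype S] [DecidableEq S] {E : S → S → Prop} [DecidableRel E]

lemma mem_parents' {p s : S} : p ∈ parents E s ↔ E p s := by simp [parents]

lemma mem_children' {s c : S} : c ∈ children E s ↔ E s c := by simp [children]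

lemma zip_tail_concat {α : Type*} (b : α) :
    ∀ (l : List α) (p : α), l.getLast? = some p →
      (l ++ [b]).zip ((l ++ [b]).tail) = l.zip l.tail ++ [(p, b)]
  | [], p, h => by simp at h
  | [a], p, h => by simp_all
  | a :: c :: l, p, h => by
      have h' : (c :: l).getLast? = some p := by simpa using h
      have ih := zip_tail_concat b (c :: l) p h'
      simp only [List.cons_append, List.zip_cons_cons, List.tail_cons] at ih ⊢
      simp [ih]

lemma chain'_nodup (hacyc : ∀ s : S, ¬ Relation.TransGen E s s) {l : List S}
    (h : l.Chain' E) : l.Nodup := by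
  have h1 : l.Chain' (Relation.TransGen E) := h.imp (fun _ _ h => Relation.TransGen.single h)
  have h2 := List.isChain_iff_pairwise.mp h1
  have h3 : l.Pairwise (· ≠ ·) := by
    refine h2.imp ?_
    intro a b hab he
    subst he; exact hacyc a hab
  exact h3

lemma pset_finite (hacyc : ∀ s : S, ¬ Relation.TransGen E s s) (s₀ x : S) :
    {l : List S | l.Chain' E ∧ l.head? = some s₀ ∧ l.getLast? = some x}.Finite := by
  apply Set.Finite.subset (List.finite_length_le S (Fintype.card S))
  intro l hl
  exact (chain'_nodup hacyc hl.1).length_le_card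

lemma last_edge {l : List S} {x : S} (hc : l.Chain' E) (hlast : l.getLast? = some x)
    (hlen : 2 ≤ l.length) :
    ∃ l' p, l = l' ++ [x] ∧ l'.getLast? = some p ∧ E p x ∧ l'.Chain' E ∧ l'.head? = l.head? := by
  have hne : l ≠ [] := by rintro rfl; simp at hlast
  have hx : l.getLast hne = x := by
    have := List.getLast?_eq_getLast hne
    rw [hlast] at this; exact (Option.some_injective _ this.symm)
  have hd : l.dropLast ++ [x] = l := by rw [← hx]; exact List.dropLast_append_getLast hne
  have hdne : l.dropLast ≠ [] := by
    have : l.dropLast.length = l.length - 1 := List.length_dropLast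
    intro h; rw [h] at this; simp at this; omega
  have hlast' : l.dropLast.getLast? = some (l.dropLast.getLast hdne) :=
    List.getLast?_eq_getLast hdne
  have hc' := List.isChain_append.mp (hd ▸ hc)
  refine ⟨l.dropLast, l.dropLast.getLast hdne, hd.symm, hlast', ?_, hc'.1, ?_⟩
  · exact hc'.2.2 _ hlast' x rfl
  · conv_rhs => rw [← hd]
    cases h : l.dropLast with
    | nil => exact absurd h hdne
    | cons a t => simp [h]

lemma Fpos (hacyc : ∀ s : S, ¬ Relation.TransGen E s s)
    (R F : S → ℝ) (hRpos : ∀ x, children E x = ∅ → 0 < R x)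
    (hFterm : ∀ x, children E x = ∅ → F x = R x)
    (hFrec : ∀ s, (children E s).Nonempty →
      F s = ∑ s' ∈ children E s, F s' / ((parents E s').card : ℝ)) :
    ∀ s, 0 < F s := by
  have wf : WellFounded (fun a b : S => Relation.TransGen E b a) := by
    haveI : IsIrrefl S (fun a b : S => Relation.TransGen E b a) := ⟨fun a h => hacyc a h⟩
    haveI : IsTrans S (fun a b : S => Relation.TransGen E b a) :=
      ⟨fun a b c h1 h2 => h2.trans h1⟩
    exact Finite.wellFounded_of_trans_of_irrefl _
  intro s
  refine wf.induction (C := fun s => 0 < F s) s (fun s IH => ?_)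
  beta_reduce
  by_cases h : children E s = ∅
  · rw [hFterm s h]; exact hRpos s h
  · have hne : (children E s).Nonempty := Finset.nonempty_iff_ne_empty.mpr h
    rw [hFrec s hne]
    apply Finset.sum_pos _ hne
    intro c hc
    have hEc : E s c := mem_children'.mp hc
    apply div_pos (IH c (Relation.TransGen.single hEc))
    have : s ∈ parents E c := mem_parents'.mpr hEc
    exact_mod_cast Nat.cast_pos.mpr (Finset.card_pos.mpr ⟨s, this⟩)

lemma main_sum (hacyc : ∀ s : S, ¬ Relation.TransGen E s s) (s₀ : S)
    (hroot : parents E s₀ = ∅)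
    (hpar : ∀ s : S, s ≠ s₀ → (parents E s).Nonempty)
    (F : S → ℝ) (hFpos : ∀ s, 0 < F s) :
    ∀ s : S, ∑ᶠ l ∈ {l : List S | l.Chain' E ∧ l.head? = some s₀ ∧ l.getLast? = some s},
        ((l.zip l.tail).map
          (fun p => F p.2 / (((parents E p.2).card : ℝ) * F p.1))).prod
      = F s / F s₀ := by
  have wf : WellFounded (Relation.TransGen E) := by
    haveI : IsIrrefl S (Relation.TransGen E) := ⟨hacyc⟩
    exact Finite.wellFounded_of_trans_of_irrefl _
  set W : List S → ℝ := fun l => ((l.zip l.tail).map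
    (fun p => F p.2 / (((parents E p.2).card : ℝ) * F p.1))).prod with hW
  intro s
  refine wf.induction (C := fun s =>
    ∑ᶠ l ∈ {l : List S | l.Chain' E ∧ l.head? = some s₀ ∧ l.getLast? = some s}, W l
      = F s / F s₀) s (fun s IH => ?_)
  beta_reduce
  by_cases hs0 : s = s₀
  · subst hs0
    have hset : {l : List S | l.Chain' E ∧ l.head? = some s ∧ l.getLast? = some s}
        = {[s]} := by
      ext l
      simp only [Set.mem_setOf_eq, Set.mem_singleton_iff]
      constructor
      · rintro ⟨hc, hh, hl⟩
        match l with
        | [] => simp at hh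
        | [a] => simp at hh; rw [hh]
        | a :: b :: t =>
          obtain ⟨l', p, _, _, hEp, _, _⟩ := last_edge hc hl (by simp)
          have : p ∈ parents E s := mem_parents'.mpr hEp
          rw [hroot] at this; simp at this
      · rintro rfl; exact ⟨List.isChain_singleton s, rfl, rfl⟩
    rw [hset, finsum_mem_singleton]
    simp [hW, div_self (hFpos s).ne']
  · have hfin := pset_finite (E := E) hacyc s₀ s
    rw [← hfin.coe_toFinset, finsum_mem_coe_finset]
    have hbi : hfin.toFinset = (parents E s).biUnion
        (fun p => ((pset_finite (E := E) hacyc s₀ p).toFinset).image (· ++ [s])) := by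
      ext l
      simp only [Set.Finite.mem_toFinset, Set.mem_setOf_eq, Finset.mem_biUnion,
        Finset.mem_image]
      constructor
      · rintro ⟨hc, hh, hl⟩
        have hlen : 2 ≤ l.length := by
          match l with
          | [] => simp at hh
          | [a] =>
            simp at hh hl; rw [← hh, hl] at hs0; exact absurd rfl hs0
          | a :: b :: t => simp
        obtain ⟨l', p, rfl, hlp, hEp, hc', hh'⟩ := last_edge hc hl hlen
        exact ⟨p, mem_parents'.mpr hEp, l', ⟨hc', hh'.symm ▸ hh, hlp⟩, rfl⟩
      · rintro ⟨p, hp, l', ⟨hc', hh', hl'⟩, rfl⟩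
        have hne : l' ≠ [] := by rintro rfl; simp at hh'
        refine ⟨?_, ?_, List.getLast?_concat⟩
        · rw [List.Chain', List.isChain_append]
          refine ⟨hc', List.isChain_singleton s, ?_⟩
          intro u hu v hv
          rw [hl'] at hu; simp at hu hv
          rw [← hu, ← hv]; exact mem_parents'.mp hp
        · match l', hh' with
          | a :: t, hh' => simpa using hh'
    rw [hbi, Finset.sum_biUnion]
    · have hterm : ∀ p ∈ parents E s,
          ∑ l ∈ ((pset_finite (E := E) hacyc s₀ p).toFinset).image (· ++ [s]) , W l
            = F s / ((parents E s).card * F s₀) := by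
        intro p hp
        rw [Finset.sum_image]
        · have hsum : ∀ l ∈ (pset_finite (E := E) hacyc s₀ p).toFinset,
              W (l ++ [s]) = W l * (F s / (((parents E s).card : ℝ) * F p)) := by
            intro l hl
            simp only [Set.Finite.mem_toFinset, Set.mem_setOf_eq] at hl
            rw [hW]
            simp only
            rw [zip_tail_concat s l p hl.2.2, List.map_append, List.prod_append]
            simp [hW]
          rw [Finset.sum_congr rfl hsum, ← Finset.sum_mul]
          have hIH : ∑ᶠ l ∈ {l : List S | l.Chain' E ∧ l.head? = some s₀ ∧
              l.getLast? = some p}, W l = F p / F s₀ :=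
            IH p (Relation.TransGen.single (mem_parents'.mp hp))
          rw [← (pset_finite (E := E) hacyc s₀ p).coe_toFinset, finsum_mem_coe_finset] at hIH
          rw [hIH]
          have hFp := (hFpos p).ne'
          have hFs0 := (hFpos s₀).ne'
          have hcard : ((parents E s).card : ℝ) ≠ 0 := by
            exact_mod_cast (Finset.card_pos.mpr (hpar s hs0)).ne'
          field_simp
        · intro a _ b _ hab
          have := congrArg List.dropLast hab
          simpa [List.dropLast_concat] using this
      rw [Finset.sum_congr rfl hterm, Finset.sum_const, nsmul_eq_mul]
      have hcard : ((parents E s).card : ℝ) ≠ 0 := by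
        exact_mod_cast (Finset.card_pos.mpr (hpar s hs0)).ne'
      have hFs0 := (hFpos s₀).ne'
      field_simp
    · intro p hp q hq hpq
      simp only [Finset.disjoint_left, Finset.mem_image, Set.Finite.mem_toFinset,
        Set.mem_setOf_eq]
      rintro l ⟨l₁, h₁, rfl⟩ ⟨l₂, h₂, he⟩
      have : l₂ = l₁ := by
        have := congrArg List.dropLast he
        simpa [List.dropLast_concat] using this
      subst this
      rw [h₁.2.2] at h₂
      exact hpq (Option.some_injective _ h₂.2.2)

end Aux

/-- **reward matching.** In a finite DAG in which `s₀` is the unique state with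
no parents, every state is reachable from `s₀`, the terminal set is nonempty, `R` is a positive
terminal reward and `F` the flow-iteration solution, define the forward policy
`P_F(s'|s) = F(s')/(|B(s')|·F(s))`. Then for every terminal state `x`, the sum over all complete
trajectories `τ = (s₀ → s₁ → ⋯ → s_n = x)` of `∏_{t=0}^{n-1} P_F(s_{t+1}|s_t)` equals
`R(x)/F(s₀)`; i.e. `P_F` samples each terminal state with probability proportional to its
reward. Trajectories are encoded as lists `l` with `l.Chain' E`, first element `s₀`, last
element `x`, and the product is taken over the consecutive pairs `l.zip l.tail`. -/
theorem stmt10 {S : Type*} [Fintype S] [DecidableEq S] (E : S → S → Prop) [DecidableRel E]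
    (hacyc : ∀ s : S, ¬ Relation.TransGen E s s)
    (s₀ : S)
    (hroot : parents E s₀ = ∅)
    (hpar : ∀ s : S, s ≠ s₀ → (parents E s).Nonempty)
    (hreach : ∀ s : S, Relation.ReflTransGen E s₀ s)
    (hX : ∃ x : S, children E x = ∅)
    (R : S → ℝ) (hRpos : ∀ x, children E x = ∅ → 0 < R x)
    (F : S → ℝ)
    (hFterm : ∀ x, children E x = ∅ → F x = R x)
    (hFrec : ∀ s, (children E s).Nonempty →
      F s = ∑ s' ∈ children E s, F s' / ((parents E s').card : ℝ)) :
    ∀ x : S, children E x = ∅ →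
      ∑ᶠ l ∈ {l : List S | l.Chain' E ∧ l.head? = some s₀ ∧ l.getLast? = some x},
        ((l.zip l.tail).map
          (fun p => F p.2 / (((parents E p.2).card : ℝ) * F p.1))).prod
      = R x / F s₀ := by
  intro x hx
  have hFpos := Fpos hacyc R F hRpos hFterm hFrec
  have := main_sum hacyc s₀ hroot hpar F hFpos x
  rw [this, hFterm x hx]
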